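/- Let M be a generalized tree monoid: M is generated by a totally ordered set X such that each x ∈ X satisfies x^{k+1} = x^k for some k, and whenever x < y in X, either x and y commute or y is idempotent and y·x·y = y·x. Then M is R-trivial. -/

import Mathlib

set_option linter.unusedSectionVars false

namespace GTMaux

variable {M ι : Type*} [Monoid M] [LinearOrder ι] (x : ι → M)

def P (w : List ι) : M := (w.map x).prod

lemma P_nil : P x ([] : List ι) = 1 := rfl
lemma P_cons (s : ι) (w : List ι) : P x (s :: w) = x s * P x w := by simp [P]
lemma P_append (u v : List ι) : P x (u ++ v) = P x u * P x v := by simp [P]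

lemma absorb_word {e : M} {u : List ι} (h : ∀ s ∈ u, e * x s = e) :
    e * P x u = e := by
  induction u with
  | nil => simp [P_nil]
  | cons a t ih =>
      rw [P_cons, ← mul_assoc, h a (List.mem_cons_self)]
      exact ih (fun s hs => h s (List.mem_cons_of_mem _ hs))

lemma absorb_pow {e v : M} (h : e * v = e) : ∀ t, e * v ^ t = e := by
  intro t; induction t with
  | zero => simp
  | succ t ih => rw [pow_succ, ← mul_assoc, ih, h]

lemma pow_stab (x0 : M) (k : ℕ) (hk : x0 ^ (k + 1) = x0 ^ k) :
    ∀ n, k ≤ n → x0 ^ n * x0 = x0 ^ n := by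
  have main : ∀ d, x0 ^ (k + d) * x0 = x0 ^ (k + d) := by
    intro d
    induction d with
    | zero => simpa [← pow_succ] using hk
    | succ d ih =>
        have h1 : x0 ^ (k + d + 1) = x0 ^ (k + d) := by
          rw [pow_succ, ih]
        rw [show k + (d+1) = k + d + 1 from rfl, h1]
        exact ih
  intro n hn
  obtain ⟨d, rfl⟩ := Nat.exists_eq_add_of_le hn
  exact main d

lemma good_mul {z a b : M} (ha : z * a * z = z * a) (hb : z * b * z = z * b) :
    z * (a * b) * z = z * (a * b) := by
  rw [← mul_assoc, ← ha]
  simp only [mul_assoc] at hb ⊢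
  rw [hb]

lemma good_pow {z v : M} (hz : z * z = z) (hv : z * v * z = z * v) :
    ∀ t, z * v ^ t * z = z * v ^ t := by
  intro t
  induction t with
  | zero => simpa using hz
  | succ t ih => rw [pow_succ]; exact good_mul ih hv

lemma good_P (j : ι) (hz : x j * x j = x j) :
    ∀ u : List ι, (∀ s ∈ u, x j * x s * x j = x j * x s) →
      x j * P x u * x j = x j * P x u := by
  intro u
  induction u with
  | nil => intro _; simpa [P_nil] using hz
  | cons s t ih =>
      intro h
      rw [P_cons]
      exact good_mul (h s (List.mem_cons_self))
        (ih (fun a ha => h a (List.mem_cons_of_mem _ ha)))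

lemma good_insert {z V c : M} (g : z * V * z = z * V) :
    z * (V * (z * c)) = z * (V * c) := by
  simp only [← mul_assoc]
  rw [g]

lemma trans_right {z V b b' : M} (g : z * V * z = z * V) (h : z * b = z * b') :
    z * (V * b) = z * (V * b') := by
  rw [← mul_assoc, ← g]
  simp only [mul_assoc]
  rw [h]
  simp only [← mul_assoc]
  rw [g]

lemma erase_j (j : ι) (hz : x j * x j = x j) :
    ∀ u : List ι, (∀ s ∈ u, x j * x s * x j = x j * x s) →
      x j * P x u = x j * P x (u.filter (· ≠ j)) := by
  intro u
  induction u with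
  | nil => intro _; rfl
  | cons s t ih =>
      intro h
      have iht := ih (fun a ha => h a (List.mem_cons_of_mem _ ha))
      by_cases hsj : s = j
      · subst hsj
        have hf : (s :: t).filter (· ≠ s) = t.filter (· ≠ s) := by simp
        rw [hf, P_cons, ← mul_assoc, hz, iht]
      · have hf : (s :: t).filter (· ≠ j) = s :: t.filter (· ≠ j) := by simp [hsj]
        rw [hf, P_cons, P_cons, ← mul_assoc, ← mul_assoc,
          ← h s (List.mem_cons_self)]
        simp only [mul_assoc]
        rw [iht]

lemma split_first (j : ι) : ∀ w : List ι, j ∈ w → ∃ p q, w = p ++ j :: q ∧ j ∉ p := by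
  intro w
  induction w with
  | nil => intro h; exact absurd h (List.not_mem_nil)
  | cons s t ih =>
      intro h
      by_cases hsj : s = j
      · subst hsj; exact ⟨[], t, rfl, List.not_mem_nil⟩
      · have hjt : j ∈ t := by
          rcases List.mem_cons.mp h with h1 | h1
          · exact absurd h1.symm hsj
          · exact h1
        obtain ⟨p, q, hpq, hjp⟩ := ih hjt
        refine ⟨s :: p, q, by rw [hpq]; rfl, ?_⟩
        intro hmem
        rcases List.mem_cons.mp hmem with h1 | h1
        · exact hsj h1.symm
        · exact hjp h1

lemma factor_comm (j : ι) : ∀ w : List ι, (∀ s ∈ w, x s * x j = x j * x s) →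
    P x w = P x (w.filter (· ≠ j)) * (x j) ^ (w.count j) := by
  intro w
  induction w with
  | nil => intro _; simp [P_nil]
  | cons s t ih =>
      intro h
      have iht := ih (fun a ha => h a (List.mem_cons_of_mem _ ha))
      by_cases hsj : s = j
      · subst hsj
        have hf : (s :: t).filter (· ≠ s) = t.filter (· ≠ s) := by simp
        have hcnt : (s :: t).count s = t.count s + 1 := List.count_cons_self
        have hcomm : Commute (x s) (P x (t.filter (· ≠ s))) := by
          apply Commute.list_prod_right
          intro y hy
          obtain ⟨a, ha, rfl⟩ := List.mem_map.mp hy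
          exact ((h a (List.mem_cons_of_mem _ (List.mem_filter.mp ha).1)).symm :
            x s * x a = x a * x s)
        rw [hf, hcnt, P_cons, iht, ← mul_assoc, hcomm.eq, mul_assoc, ← pow_succ']
      · have hf : (s :: t).filter (· ≠ j) = s :: t.filter (· ≠ j) := by simp [hsj]
        have hcnt : (s :: t).count j = t.count j := by
          simp [List.count_cons, Ne.symm hsj, hsj]
        rw [hf, hcnt, P_cons, P_cons, iht, mul_assoc]


lemma key (hpow : ∀ i, ∃ k : ℕ, x i ^ (k + 1) = x i ^ k)
    (hrel : ∀ i j : ι, i < j →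
      (x i * x j = x j * x i) ∨ (x j * x j = x j ∧ x j * x i * x j = x j * x i)) :
    ∀ (n : ℕ) (w : List ι), w.toFinset.card ≤ n →
      ∃ N : ℕ, ∀ s ∈ w, (P x w) ^ (N + 1) * x s = (P x w) ^ (N + 1) := by
  intro n
  induction n with
  | zero =>
    intro w hw
    have hw0 : w.toFinset = ∅ := Finset.card_eq_zero.mp (Nat.le_zero.mp hw)
    have hwe : w = [] := by simpa using hw0
    subst hwe
    exact ⟨0, fun s hs => absurd hs List.not_mem_nil⟩
  | succ n ih =>
    intro w hw
    rcases eq_or_ne w [] with rfl | hne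
    · exact ⟨0, fun s hs => absurd hs List.not_mem_nil⟩
    have hwne : w.toFinset.Nonempty := by
      obtain ⟨s, hs⟩ := List.exists_mem_of_ne_nil w hne
      exact ⟨s, List.mem_toFinset.mpr hs⟩
    set j := w.toFinset.max' hwne with hj
    have hjw : j ∈ w := List.mem_toFinset.mp (w.toFinset.max'_mem hwne)
    have hjmax : ∀ s ∈ w, s ≤ j := fun s hs => Finset.le_max' _ s (List.mem_toFinset.mpr hs)
    by_cases hA : ∀ s ∈ w, x s * x j = x j * x s
    · -- Case A : x j commutes with every letter of w
      have hu₀w : ∀ s ∈ w.filter (· ≠ j), s ∈ w := fun s hs => (List.mem_filter.mp hs).1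
      have hju₀ : j ∉ w.filter (· ≠ j) := by
        intro hj'
        have h2 := (List.mem_filter.mp hj').2
        simp at h2
      have hcard : (w.filter (· ≠ j)).toFinset.card ≤ n := by
        have hss : (w.filter (· ≠ j)).toFinset ⊂ w.toFinset := by
          constructor
          · intro s hs
            exact List.mem_toFinset.mpr (hu₀w s (List.mem_toFinset.mp hs))
          · intro hsub
            exact hju₀ (List.mem_toFinset.mp (hsub (List.mem_toFinset.mpr hjw)))
        have := Finset.card_lt_card hss
        omega
      obtain ⟨N₀, hN₀⟩ := ih (w.filter (· ≠ j)) hcard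
      obtain ⟨k, hk⟩ := hpow j
      have hfact : P x w = P x (w.filter (· ≠ j)) * (x j) ^ (w.count j) :=
        factor_comm x j w hA
      have hc : 1 ≤ w.count j := List.count_pos_iff.mpr hjw
      set c := w.count j with hcdef
      set N := N₀ + k + 1 with hNdef
      set v := P x (w.filter (· ≠ j)) with hv
      have hcomj : Commute v ((x j) ^ c) := by
        apply Commute.symm
        apply Commute.pow_left
        apply Commute.list_prod_right
        intro y hy
        obtain ⟨a, ha, rfl⟩ := List.mem_map.mp hy
        exact ((hA a (hu₀w a ha)).symm : x j * x a = x a * x j)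
      have hPw : (P x w) ^ (N + 1) = v ^ (N + 1) * (x j) ^ (c * (N + 1)) := by
        rw [hfact, hcomj.mul_pow, ← pow_mul]
      have hstab : v ^ (N + 1) = v ^ (N₀ + 1) := by
        have h1 : v ^ (N₀ + 1) * v = v ^ (N₀ + 1) :=
          absorb_word x (fun s hs => hN₀ s hs)
        have h2 := absorb_pow h1 (k + 1)
        rw [show N + 1 = (N₀ + 1) + (k + 1) from by omega, pow_add, h2]
      refine ⟨N, ?_⟩
      intro s hs
      rw [hPw, hstab]
      by_cases hsj : s = j
      · subst hsj
        rw [mul_assoc]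
        congr 1
        apply pow_stab (x j) k hk
        calc k ≤ N + 1 := by omega
          _ ≤ c * (N + 1) := Nat.le_mul_of_pos_left _ hc
      · have hsu : s ∈ w.filter (· ≠ j) := List.mem_filter.mpr ⟨hs, by simpa using hsj⟩
        have hcs : Commute (x s) ((x j) ^ (c * (N + 1))) :=
          Commute.pow_right (hA s hs) _
        rw [mul_assoc, ← hcs.eq, ← mul_assoc, hN₀ s hsu]
    · -- Case B : x j is idempotent and absorbs on both sides
      push_neg at hA
      obtain ⟨s₀, hs₀w, hs₀ne⟩ := hA
      have hs₀j : s₀ < j := by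
        refine lt_of_le_of_ne (hjmax s₀ hs₀w) ?_
        rintro rfl
        exact hs₀ne rfl
      have hz : x j * x j = x j := by
        rcases hrel s₀ j hs₀j with hcomm | ⟨hz, _⟩
        · exact absurd hcomm hs₀ne
        · exact hz
      have habs : ∀ s ∈ w, x j * x s * x j = x j * x s := by
        intro s hs
        rcases eq_or_lt_of_le (hjmax s hs) with rfl | hlt
        · rw [hz, hz]
        · rcases hrel s j hlt with hcomm | ⟨_, h2⟩
          · rw [mul_assoc, hcomm, ← mul_assoc, hz]
          · exact h2
      obtain ⟨p, q, hwpq, hjp⟩ := split_first j w hjw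
      have hmemw : ∀ s, s ∈ p ∨ s ∈ q → s ∈ w := by
        intro s hs
        rw [hwpq]
        rcases hs with h1 | h1
        · exact List.mem_append_left _ h1
        · exact List.mem_append_right _ (List.mem_cons_of_mem _ h1)
      set q' := q.filter (· ≠ j) with hq'
      set u₀ := q' ++ p with hu₀
      have hu₀w : ∀ s ∈ u₀, s ∈ w := by
        intro s hs
        rcases List.mem_append.mp hs with h1 | h1
        · exact hmemw s (Or.inr (List.mem_filter.mp h1).1)
        · exact hmemw s (Or.inl h1)
      have hju₀ : j ∉ u₀ := by
        intro hmem
        rcases List.mem_append.mp hmem with h1 | h1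
        · have h2 := (List.mem_filter.mp h1).2
          simp at h2
        · exact hjp h1
      have hcard : u₀.toFinset.card ≤ n := by
        have hss : u₀.toFinset ⊂ w.toFinset := by
          constructor
          · intro s hs
            exact List.mem_toFinset.mpr (hu₀w s (List.mem_toFinset.mp hs))
          · intro hsub
            exact hju₀ (List.mem_toFinset.mp (hsub (List.mem_toFinset.mpr hjw)))
        have := Finset.card_lt_card hss
        omega
      obtain ⟨N₀, hN₀⟩ := ih u₀ hcard
      set A := P x p with hA'
      set B' := P x q' with hB'
      set Bq := P x q with hBq
      have hPu₀ : P x u₀ = B' * A := P_append x q' p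
      have hwEq : P x w = A * (x j * Bq) := by
        rw [hwpq, P_append, P_cons]
      have hqB' : x j * Bq = x j * B' :=
        erase_j x j hz q (fun s hs => habs s (hmemw s (Or.inr hs)))
      have goodv : x j * P x u₀ * x j = x j * P x u₀ :=
        good_P x j hz u₀ (fun s hs => habs s (hu₀w s hs))
      have goodvt : ∀ t, x j * (P x u₀) ^ t * x j = x j * (P x u₀) ^ t :=
        good_pow hz goodv
      have claimC : ∀ t : ℕ, (P x w) ^ (t + 1) = A * (x j * ((P x u₀) ^ t * B')) := by
        intro t
        induction t with
        | zero =>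
            rw [pow_one, hwEq, pow_zero, one_mul, hqB']
        | succ t ihc =>
            rw [pow_succ, ihc, hwEq]
            have h1 : (P x u₀) ^ t * (B' * (A * (x j * Bq)))
                = (P x u₀) ^ (t + 1) * (x j * Bq) := by
              rw [pow_succ, hPu₀]
              simp only [mul_assoc]
            simp only [mul_assoc]
            rw [h1, good_insert (goodvt (t + 1)), trans_right (goodvt (t + 1)) hqB']
      refine ⟨N₀ + 1, ?_⟩
      intro s hs
      have hE : (P x u₀) ^ (N₀ + 1) * B' = (P x u₀) ^ (N₀ + 1) :=
        absorb_word x (fun a ha => hN₀ a (List.mem_append_left _ ha))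
      rw [claimC (N₀ + 1), hE]
      by_cases hsj : s = j
      · subst hsj
        have g := goodvt (N₀ + 1)
        simp only [mul_assoc] at g ⊢
        rw [g]
      · have hsu : s ∈ u₀ := by
          rw [hwpq] at hs
          rcases List.mem_append.mp hs with h1 | h1
          · exact List.mem_append_right _ h1
          · rcases List.mem_cons.mp h1 with h2 | h2
            · exact absurd h2 hsj
            · exact List.mem_append_left _ (List.mem_filter.mpr ⟨h2, by simpa using hsj⟩)
        simp only [mul_assoc]
        rw [hN₀ s hsu]


end GTMaux

theorem generalizedTreeMonoid_rTrivial {M ι : Type*} [Monoid M] [LinearOrder ι] [Fintype ι]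
    (x : ι → M) (hgen : Submonoid.closure (Set.range x) = ⊤)
    (hpow : ∀ i, ∃ k : ℕ, x i ^ (k + 1) = x i ^ k)
    (hrel : ∀ i j : ι, i < j →
      (x i * x j = x j * x i) ∨ (x j * x j = x j ∧ x j * x i * x j = x j * x i)) :
    ∀ m m' : M, {z : M | ∃ t : M, m * t = z} = {z : M | ∃ t : M, m' * t = z} → m = m' := by
  classical
  have hword : ∀ m : M, ∃ l : List ι, GTMaux.P x l = m := by
    intro m
    have hm : m ∈ Submonoid.closure (Set.range x) := by rw [hgen]; trivial
    induction hm using Submonoid.closure_induction with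
    | mem y hy =>
        obtain ⟨i, rfl⟩ := hy
        exact ⟨[i], by simp [GTMaux.P]⟩
    | one => exact ⟨[], rfl⟩
    | mul a b _ _ ha hb =>
        obtain ⟨la, rfl⟩ := ha
        obtain ⟨lb, rfl⟩ := hb
        exact ⟨la ++ lb, GTMaux.P_append x la lb⟩
  intro m m' h
  have hm' : m' ∈ {z : M | ∃ t : M, m' * t = z} := ⟨1, mul_one m'⟩
  rw [← h] at hm'
  obtain ⟨a, ha⟩ := hm'
  have hm : m ∈ {z : M | ∃ t : M, m * t = z} := ⟨1, mul_one m⟩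
  rw [h] at hm
  obtain ⟨b, hb⟩ := hm
  obtain ⟨la, hla⟩ := hword a
  obtain ⟨lb, hlb⟩ := hword b
  have hmw : m * GTMaux.P x (la ++ lb) = m := by
    rw [GTMaux.P_append, hla, hlb, ← mul_assoc, ha, hb]
  obtain ⟨N, hN⟩ := GTMaux.key x hpow hrel (la ++ lb).toFinset.card (la ++ lb) le_rfl
  have hmN : m * (GTMaux.P x (la ++ lb)) ^ (N + 1) = m := GTMaux.absorb_pow hmw (N + 1)
  have hma : m * a = m := by
    conv_lhs => rw [← hmN]
    rw [mul_assoc, ← hla,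
      GTMaux.absorb_word x (fun s hs => hN s (List.mem_append_left _ hs)), hmN]
  rw [← ha, hma]
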